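/- Let H be a complex Hilbert space and let (R_t)_{t ≥ 0} be a family of bounded linear operators on H with R_0 = Id, R_{s+t} = R_s ∘ R_t for all s, t ≥ 0, each R_t self-adjoint, and t ↦ R_t φ continuous from [0,∞) to H for every φ ∈ H. Suppose there is a dense subset D ⊆ H such that ∫₀^∞ ⟨R_t φ, φ⟩ dt < ∞ for every φ ∈ D (note ⟨R_t φ, φ⟩ = ‖R_{t/2} φ‖² ≥ 0, and t ↦ ⟨R_t φ, φ⟩ is continuous, so the integral is well defined in [0,∞]). Then every R_t is a contraction: ‖R_t φ‖ ≤ ‖φ‖ for all t ≥ 0 and all φ ∈ H. -/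
import Mathlib


open MeasureTheory

/-- The abstract content of statement (1.8) of Lemma 1.1 of the paper: a strongly
continuous self-adjoint semigroup `(R_t)_{t≥0}` on a complex Hilbert space `H` such
that `∫₀^∞ ⟨R_t φ, φ⟩ dt < ∞` for all `φ` in a dense set `D` consists of
contractions. -/
theorem selfadjoint_semigroup_contraction {H : Type*} [NormedAddCommGroup H]
    [InnerProductSpace ℂ H] [CompleteSpace H]
    (R : ℝ → H →L[ℂ] H)
    (hR0 : R 0 = ContinuousLinearMap.id ℂ H)
    (hsemi : ∀ s t : ℝ, 0 ≤ s → 0 ≤ t → R (s + t) = (R s).comp (R t))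
    (hsa : ∀ t : ℝ, 0 ≤ t → ∀ φ ψ : H,
      inner (𝕜 := ℂ) (R t φ) ψ = inner (𝕜 := ℂ) φ (R t ψ))
    (hcont : ∀ φ : H, ContinuousOn (fun t => R t φ) (Set.Ici (0 : ℝ)))
    (D : Set H) (hD : Dense D)
    (hfin : ∀ φ ∈ D, ∫⁻ t in Set.Ioi (0 : ℝ),
        ENNReal.ofReal (inner (𝕜 := ℂ) (R t φ) φ).re < ⊤) :
    ∀ t : ℝ, 0 ≤ t → ∀ φ : H, ‖R t φ‖ ≤ ‖φ‖ := by
  have key : ∀ t : ℝ, 0 ≤ t → ∀ φ ∈ D, ‖R t φ‖ ≤ ‖φ‖ := by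
    intro t ht φ hφD
    by_contra hcon
    push_neg at hcon
    have ht0 : 0 < t := by
      rcases ht.lt_or_eq with h | h
      · exact h
      · exfalso
        rw [← h, hR0] at hcon
        simp at hcon
    set a := ‖φ‖ ^ 2 with ha
    set g : ℝ → ℝ := fun s => ‖R s φ‖ ^ 2 with hg
    have hg0 : ∀ s, 0 ≤ g s := fun s => sq_nonneg _
    -- key identity : ‖R_s φ‖² = Re ⟨R_{2s} φ, φ⟩
    have hid : ∀ s : ℝ, 0 ≤ s → g s = (inner (𝕜 := ℂ) (R (2 * s) φ) φ).re := by
      intro s hs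
      have h1 : inner (𝕜 := ℂ) (R s φ) (R s φ) = inner (𝕜 := ℂ) φ (R (2 * s) φ) := by
        rw [hsa s hs φ (R s φ)]
        congr 1
        have h2 := hsemi s s hs hs
        rw [two_mul, h2]
        rfl
      have h3 : (inner (𝕜 := ℂ) φ (R (2 * s) φ)).re
          = (inner (𝕜 := ℂ) (R (2 * s) φ) φ).re := by
        rw [← inner_conj_symm (R (2 * s) φ) φ]
        exact Complex.conj_re _
      have h4 := inner_self_eq_norm_sq (𝕜 := ℂ) (R s φ)
      rw [RCLike.re_to_complex] at h4
      show ‖R s φ‖ ^ 2 = _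
      rw [← h4, h1, h3]
    -- doubling inequality
    have hdouble : ∀ s : ℝ, 0 ≤ s → (g s) ^ 2 ≤ g (2 * s) * a := by
      intro s hs
      have h1 : g s ≤ ‖R (2 * s) φ‖ * ‖φ‖ := by
        rw [hid s hs]
        have := re_inner_le_norm (𝕜 := ℂ) (R (2 * s) φ) φ
        rwa [RCLike.re_to_complex] at this
      calc (g s) ^ 2 ≤ (‖R (2 * s) φ‖ * ‖φ‖) ^ 2 := pow_le_pow_left₀ (hg0 s) h1 2
        _ = g (2 * s) * a := by rw [mul_pow]
    -- uniform bound on [0,1] by Banach–Steinhaus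
    obtain ⟨M0, hM0⟩ : ∃ C', ∀ i : Set.Icc (0 : ℝ) 1, ‖R i‖ ≤ C' := by
      apply banach_steinhaus
      intro x
      obtain ⟨C, hC⟩ := (isCompact_Icc (a := (0 : ℝ)) (b := 1)).exists_bound_of_continuousOn
        ((hcont x).mono (fun u hu => hu.1))
      exact ⟨C, fun i => hC i i.2⟩
    set M := max M0 1 with hMdef
    have hM1 : (1 : ℝ) ≤ M := le_max_right _ _
    have hM : ∀ u : ℝ, 0 ≤ u → u ≤ 1 → ‖R u‖ ≤ M :=
      fun u h1 h2 => le_trans (hM0 ⟨u, h1, h2⟩) (le_max_left _ _)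
    have hM2 : (0 : ℝ) < M ^ 2 := by positivity
    -- comparison on intervals of length 1
    have hcomp : ∀ s u : ℝ, 1 ≤ s → s - 1 ≤ u → u ≤ s → g s ≤ M ^ 2 * g u := by
      intro s u h1 h2 h3
      have hu0 : (0 : ℝ) ≤ u := by linarith
      have hsu : (0 : ℝ) ≤ s - u := by linarith
      have heq : R s φ = R (s - u) (R u φ) := by
        have h4 := hsemi (s - u) u hsu hu0
        rw [show s - u + u = s by ring] at h4
        rw [h4]
        rfl
      have hn : ‖R s φ‖ ≤ M * ‖R u φ‖ := by
        rw [heq]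
        calc ‖R (s - u) (R u φ)‖ ≤ ‖R (s - u)‖ * ‖R u φ‖ := (R (s - u)).le_opNorm _
          _ ≤ M * ‖R u φ‖ :=
            mul_le_mul_of_nonneg_right (hM _ hsu (by linarith)) (norm_nonneg _)
      calc g s = ‖R s φ‖ ^ 2 := rfl
        _ ≤ (M * ‖R u φ‖) ^ 2 := pow_le_pow_left₀ (norm_nonneg _) hn 2
        _ = M ^ 2 * g u := by rw [mul_pow]
    -- φ ≠ 0
    have hφ0 : φ ≠ 0 := by
      rintro rfl
      simp at hcon
    have ha0 : (0 : ℝ) < a := by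
      have h5 : (0 : ℝ) < ‖φ‖ := norm_pos_iff.mpr hφ0
      positivity
    set r := g t / a with hr
    have hr1 : (1 : ℝ) < r := by
      have hlt : a < g t := by
        have := pow_lt_pow_left₀ hcon (norm_nonneg φ) (n := 2) (by norm_num)
        exact this
      rw [hr]
      exact (one_lt_div ha0).mpr hlt
    -- growth : g (2^n t) ≥ a * r^(n+1)
    have hgrow : ∀ n : ℕ, a * r ^ (n + 1) ≤ g (2 ^ n * t) := by
      intro n
      induction n with
      | zero =>
        have e : a * r = g t := by rw [hr]; field_simp
        simpa using e.le
      | succ n ih =>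
        have hsn : (0 : ℝ) ≤ 2 ^ n * t := by positivity
        have e1 : (a * r ^ (n + 1)) ^ 2 ≤ (g (2 ^ n * t)) ^ 2 := by
          apply pow_le_pow_left₀ (by positivity) ih
        have e2 := hdouble (2 ^ n * t) hsn
        have e3 : g (2 ^ (n + 1) * t) = g (2 * (2 ^ n * t)) := by
          rw [show (2 : ℝ) ^ (n + 1) * t = 2 * (2 ^ n * t) by ring]
        rw [e3]
        have e4 : (a * r ^ (n + 1)) ^ 2 = (a * r ^ (2 * n + 2)) * a := by ring
        have e5 : a * r ^ (2 * n + 2) ≤ g (2 * (2 ^ n * t)) := by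
          have h6 : (a * r ^ (2 * n + 2)) * a ≤ g (2 * (2 ^ n * t)) * a := by
            rw [← e4]; exact le_trans e1 e2
          exact le_of_mul_le_mul_right h6 ha0
        refine le_trans ?_ e5
        exact mul_le_mul_of_nonneg_left
          (pow_le_pow_right₀ hr1.le (by omega)) ha0.le
    -- integral bound
    have hCfin := hfin φ hφD
    set C := ∫⁻ v in Set.Ioi (0 : ℝ),
        ENNReal.ofReal (inner (𝕜 := ℂ) (R v φ) φ).re with hCdef
    have hbound : ∀ n : ℕ, 1 ≤ 2 ^ n * t → g (2 ^ n * t) / M ^ 2 * 2 ≤ C.toReal := by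
      intro n hs1
      set s := 2 ^ n * t with hsdef
      have hlow : ∀ v ∈ Set.Ioc (2 * s - 2) (2 * s),
          ENNReal.ofReal (g s / M ^ 2)
            ≤ ENNReal.ofReal (inner (𝕜 := ℂ) (R v φ) φ).re := by
        intro v hv
        have hv1 : 2 * s - 2 < v := hv.1
        have hv2 : v ≤ 2 * s := hv.2
        have hv0 : (0 : ℝ) ≤ v / 2 := by linarith
        have hid2 : (inner (𝕜 := ℂ) (R v φ) φ).re = g (v / 2) := by
          rw [hid (v / 2) hv0, show 2 * (v / 2) = v by ring]
        apply ENNReal.ofReal_le_ofReal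
        rw [hid2, div_le_iff₀ hM2, mul_comm]
        exact hcomp s (v / 2) hs1 (by linarith) (by linarith)
      have h7 : ENNReal.ofReal (g s / M ^ 2) * ENNReal.ofReal 2 ≤ C := by
        calc ENNReal.ofReal (g s / M ^ 2) * ENNReal.ofReal 2
            = ENNReal.ofReal (g s / M ^ 2) * volume (Set.Ioc (2 * s - 2) (2 * s)) := by
              rw [Real.volume_Ioc, show 2 * s - (2 * s - 2) = 2 by ring]
          _ = ∫⁻ _ in Set.Ioc (2 * s - 2) (2 * s),
                ENNReal.ofReal (g s / M ^ 2) := by rw [setLIntegral_const]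
          _ ≤ ∫⁻ v in Set.Ioc (2 * s - 2) (2 * s),
                ENNReal.ofReal (inner (𝕜 := ℂ) (R v φ) φ).re :=
              setLIntegral_mono' measurableSet_Ioc hlow
          _ ≤ C := lintegral_mono_set (fun v hv => lt_of_le_of_lt (by linarith) hv.1)
      rw [← ENNReal.ofReal_mul (by positivity)] at h7
      exact (ENNReal.ofReal_le_iff_le_toReal hCfin.ne).mp h7
    -- derive the contradiction
    obtain ⟨n0, hn0⟩ := pow_unbounded_of_one_lt (1 / t) (one_lt_two (α := ℝ))
    obtain ⟨n1, hn1⟩ := pow_unbounded_of_one_lt (C.toReal * M ^ 2 / (2 * a)) hr1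
    set n := max n0 n1 with hn
    have hs1 : (1 : ℝ) ≤ 2 ^ n * t := by
      have h8 : (2 : ℝ) ^ n0 ≤ 2 ^ n := pow_le_pow_right₀ one_le_two (le_max_left _ _)
      have h9 : 1 / t < 2 ^ n := lt_of_lt_of_le hn0 h8
      rw [div_lt_iff₀ ht0] at h9
      linarith
    have h10 := hbound n hs1
    have h11 := hgrow n
    have h12 : C.toReal * M ^ 2 / (2 * a) < r ^ (n + 1) :=
      lt_of_lt_of_le hn1 (pow_le_pow_right₀ hr1.le (le_trans (le_max_right n0 n1) (Nat.le_succ n)))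
    rw [div_lt_iff₀ (by positivity)] at h12
    rw [div_mul_eq_mul_div, div_le_iff₀ hM2] at h10
    nlinarith [hg0 (2 ^ n * t)]
  -- extend to all of H by density
  intro t ht φ
  have hclosed : IsClosed {ψ : H | ‖R t ψ‖ ≤ ‖ψ‖} :=
    isClosed_le ((R t).continuous.norm) continuous_norm
  have hsub : D ⊆ {ψ : H | ‖R t ψ‖ ≤ ‖ψ‖} := fun ψ hψ => key t ht ψ hψ
  have h13 : closure D ⊆ {ψ : H | ‖R t ψ‖ ≤ ‖ψ‖} :=
    hclosed.closure_subset_iff.mpr hsub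
  have h14 : φ ∈ closure D := by rw [hD.closure_eq]; trivial
  exact h13 h14
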